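/- For the Cantor measure P with variance V = 1/8, and for the optimal set of 2^k points on the constraint S_{2^k}, the correction term A(k) = (1/2^{k+1}) · Σ_{σ ∈ {1,2}^k} (a(σ) + 1/2^k)² equals (2^k + 1)/(2·4^k) + (3·9^k − 1)/(16·9^k), where the values a(σ) for σ ∈ {1,2}^k are exactly the numbers c/(2·3^k) with c ranging over the set C_k (C_0 = {1}, C_k = C_{k-1} ∪ (C_{k-1} + 4·3^{k-1})). -/

import Mathlib

/-- The two generating maps of the Cantor set: `T 0 = x/3`, `T 1 = x/3 + 2/3`. -/
noncomputable def Tmap : Fin 2 → ℝ → ℝ := fun i x => if i = 0 then x / 3 else x / 3 + 2 / 3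

/-- `T_σ = T_{σ₁} ∘ ⋯ ∘ T_{σ_k}` for a word `σ ∈ {1,2}^k`. -/
noncomputable def Tcomp {k : ℕ} (σ : Fin k → Fin 2) : ℝ → ℝ :=
  (List.ofFn σ).foldr (fun i g => Tmap i ∘ g) id

/-- `a(σ) = T_σ(1/2)`. -/
noncomputable def aWord {k : ℕ} (σ : Fin k → Fin 2) : ℝ := Tcomp σ (1 / 2)

/-- The sets `C k` from the paper: `C 0 = {1}`, `C (k+1) = C k ∪ (C k + 4·3^k)`. -/
def paperC : ℕ → Finset ℕ
  | 0 => {1}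
  | (k + 1) => paperC k ∪ (paperC k).image (· + 4 * 3 ^ k)

lemma aWord_cons {k : ℕ} (i : Fin 2) (σ : Fin k → Fin 2) :
    aWord (Fin.cons i σ) = Tmap i (aWord σ) := by
  unfold aWord Tcomp
  rw [List.ofFn_succ]
  simp [Fin.cons_succ]

lemma sum_split {k : ℕ} (g : ℝ → ℝ) :
    ∑ σ : Fin (k+1) → Fin 2, g (aWord σ)
      = (∑ τ : Fin k → Fin 2, g (Tmap 0 (aWord τ)))
        + ∑ τ : Fin k → Fin 2, g (Tmap 1 (aWord τ)) := by
  rw [← Equiv.sum_comp (Fin.consEquiv (fun _ => Fin 2)) (fun σ => g (aWord σ))]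
  rw [Fintype.sum_prod_type]
  simp only [Fin.consEquiv, Equiv.coe_fn_mk]
  simp only [aWord_cons]
  rw [Fin.sum_univ_two]

lemma Tmap_zero (x : ℝ) : Tmap 0 x = x / 3 := by simp [Tmap]
lemma Tmap_one (x : ℝ) : Tmap 1 x = x / 3 + 2 / 3 := by simp [Tmap]

lemma card_words (k : ℕ) : Fintype.card (Fin k → Fin 2) = 2 ^ k := by
  simp

lemma sum1 (k : ℕ) : ∑ σ : Fin k → Fin 2, aWord σ = 2 ^ k / 2 := by
  induction k with
  | zero => simp [aWord, Tcomp]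
  | succ k ih =>
    rw [sum_split (fun x => x)]
    simp only [Tmap_zero, Tmap_one]
    rw [Finset.sum_add_distrib, ← Finset.sum_div, ← Finset.sum_div, ih,
      Finset.sum_const, Finset.card_univ, card_words]
    ring

lemma sum2 (k : ℕ) :
    ∑ σ : Fin k → Fin 2, (aWord σ) ^ 2 = 2 ^ k * (3 * 9 ^ k - 1) / (8 * 9 ^ k) := by
  induction k with
  | zero => norm_num [aWord, Tcomp]
  | succ k ih =>
    rw [sum_split (fun x => x ^ 2)]
    simp only [Tmap_zero, Tmap_one]
    have e1 : ∀ x : ℝ, (x / 3) ^ 2 = x ^ 2 / 9 := by intro x; ring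
    have e2 : ∀ x : ℝ, (x / 3 + 2 / 3) ^ 2 = x ^ 2 / 9 + (4 / 9) * x + 4 / 9 := by
      intro x; ring
    simp only [e1, e2]
    rw [Finset.sum_add_distrib, Finset.sum_add_distrib, ← Finset.sum_div,
      ← Finset.sum_div, ← Finset.mul_sum, ih, sum1, Finset.sum_const,
      Finset.card_univ, card_words]
    have h9 : (9 : ℝ) ^ k > 0 := by positivity
    field_simp
    ring

lemma range_succ (k : ℕ) :
    Set.range (fun σ : Fin (k+1) → Fin 2 => aWord σ)
      = Tmap 0 '' Set.range (fun τ : Fin k → Fin 2 => aWord τ)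
        ∪ Tmap 1 '' Set.range (fun τ : Fin k → Fin 2 => aWord τ) := by
  ext x
  simp only [Set.mem_range, Set.mem_union, Set.mem_image]
  constructor
  · rintro ⟨σ, rfl⟩
    have hc : aWord σ = Tmap (σ 0) (aWord (Fin.tail σ)) := by
      rw [← aWord_cons (σ 0) (Fin.tail σ), Fin.cons_self_tail]
    have h2 : σ 0 = 0 ∨ σ 0 = 1 := by omega
    rcases h2 with h | h
    · exact Or.inl ⟨aWord (Fin.tail σ), ⟨Fin.tail σ, rfl⟩, by rw [hc, h]⟩
    · exact Or.inr ⟨aWord (Fin.tail σ), ⟨Fin.tail σ, rfl⟩, by rw [hc, h]⟩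
  · rintro (⟨_, ⟨τ, rfl⟩, rfl⟩ | ⟨_, ⟨τ, rfl⟩, rfl⟩)
    · exact ⟨Fin.cons 0 τ, aWord_cons 0 τ⟩
    · exact ⟨Fin.cons 1 τ, aWord_cons 1 τ⟩

lemma range_eq (k : ℕ) :
    Set.range (fun σ : Fin k → Fin 2 => aWord σ)
      = (fun c : ℕ => (c : ℝ) / (2 * 3 ^ k)) '' (paperC k : Set ℕ) := by
  induction k with
  | zero =>
    rw [Set.range_unique]
    simp [aWord, Tcomp, paperC]
  | succ k ih =>
    rw [range_succ, ih, paperC]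
    rw [Finset.coe_union, Finset.coe_image, Set.image_union,
      Set.image_image, Set.image_image, Set.image_image]
    congr 1
    · apply Set.image_congr'
      intro c
      rw [Tmap_zero]
      ring
    · apply Set.image_congr'
      intro c
      rw [Tmap_one]
      push_cast
      have h3 : (3 : ℝ) ^ k ≠ 0 := by positivity
      field_simp
      ring

theorem correction_term (k : ℕ) :
    ((1 / 2 ^ (k + 1) : ℝ) * ∑ σ : Fin k → Fin 2, (aWord σ + 1 / 2 ^ k) ^ 2
      = (2 ^ k + 1) / (2 * 4 ^ k) + (3 * 9 ^ k - 1) / (16 * 9 ^ k)) ∧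
    (Set.range (fun σ : Fin k → Fin 2 => aWord σ)
      = (fun c : ℕ => (c : ℝ) / (2 * 3 ^ k)) '' (paperC k : Set ℕ)) := by
  refine ⟨?_, range_eq k⟩
  have e : ∀ x : ℝ, (x + 1 / 2 ^ k) ^ 2
      = x ^ 2 + (2 / 2 ^ k) * x + (1 / 2 ^ k) ^ 2 := by intro x; ring
  simp only [e]
  rw [Finset.sum_add_distrib, Finset.sum_add_distrib, ← Finset.mul_sum,
    sum1, sum2, Finset.sum_const, Finset.card_univ, card_words]
  have h2 : (2 : ℝ) ^ k > 0 := by positivity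
  have h9 : (9 : ℝ) ^ k > 0 := by positivity
  have h4 : (4 : ℝ) ^ k > 0 := by positivity
  have h49 : (4 : ℝ) ^ k = 2 ^ k * 2 ^ k := by rw [← mul_pow]; norm_num
  field_simp
  ring_nf
  rw [h49]
  have h1 : ((1:ℝ) / 2) ^ k * 2 ^ k = 1 := by rw [← mul_pow]; norm_num
  linear_combination (256 * (9:ℝ) ^ k * 2 ^ k * (((1:ℝ) / 2) ^ k * 2 ^ k + 1)) * h1
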